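/- Let β₁, …, β_q be distinct positive roots all of the same height k+1 in a crystallographic root system Φ. Then the intersection X = H_{β₁} ∩ ⋯ ∩ H_{β_q} of their orthogonal hyperplanes has codimension q in the ambient vector space. -/

import Mathlib

open Finset Submodule
open scoped Classical

/-- A (reduced) crystallographic root system in the Euclidean space `ℝⁿ`,
together with a chosen simple system `Δ` and the corresponding positive
roots `Pos`, and the (nonnegative integer) coordinates `coeff β a` of a
positive root `β` with respect to the simple roots. -/
structure CRS (n : ℕ) where
  Φ : Finset (EuclideanSpace ℝ (Fin n))
  Δ : Finset (EuclideanSpace ℝ (Fin n))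
  Pos : Finset (EuclideanSpace ℝ (Fin n))
  coeff : EuclideanSpace ℝ (Fin n) → EuclideanSpace ℝ (Fin n) → ℕ
  zero_notmem : (0 : EuclideanSpace ℝ (Fin n)) ∉ Φ
  span_top : Submodule.span ℝ (Φ : Set (EuclideanSpace ℝ (Fin n))) = ⊤
  Δ_sub : Δ ⊆ Pos
  Pos_sub : Pos ⊆ Φ
  neg_mem : ∀ α ∈ Φ, -α ∈ Φ
  pos_or_neg : ∀ α ∈ Φ, α ∈ Pos ∨ -α ∈ Pos
  not_pos_and_neg : ∀ α ∈ Pos, -α ∉ Pos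
  reduced : ∀ α ∈ Φ, ∀ c : ℝ, c • α ∈ Φ → c = 1 ∨ c = -1
  reflect_mem : ∀ α ∈ Φ, ∀ β ∈ Φ,
    β - ((2 * inner ℝ α β / inner ℝ α α : ℝ)) • α ∈ Φ
  cartan_int : ∀ α ∈ Φ, ∀ β ∈ Φ, ∃ z : ℤ, (2 * inner ℝ α β / inner ℝ α α : ℝ) = z
  Δ_indep : LinearIndependent ℝ (fun a : Δ => (a : EuclideanSpace ℝ (Fin n)))
  pos_eq_sum : ∀ β ∈ Pos, β = ∑ a ∈ Δ, (coeff β a : ℝ) • a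

namespace CRS

variable {n : ℕ}

/-- The height of a positive root: the sum of its coordinates over `Δ`. -/
def ht (R : CRS n) (β : EuclideanSpace ℝ (Fin n)) : ℕ := ∑ a ∈ R.Δ, R.coeff β a

/-- The root order: `rle β α` means `β ≤ α`, i.e. `α - β` is a nonnegative
integer combination of the simple roots. -/
def rle (R : CRS n) (β α : EuclideanSpace ℝ (Fin n)) : Prop :=
  ∃ c : EuclideanSpace ℝ (Fin n) → ℕ, α - β = ∑ a ∈ R.Δ, (c a : ℝ) • a

/-- An ideal of the positive root poset: a downward closed set of positive roots. -/
def IsIdeal (R : CRS n) (I : Finset (EuclideanSpace ℝ (Fin n))) : Prop :=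
  I ⊆ R.Pos ∧ ∀ α ∈ I, ∀ β ∈ R.Pos, R.rle β α → β ∈ I

/-- Irreducibility: the simple system cannot be split into two nonempty
mutually orthogonal parts. -/
def Irred (R : CRS n) : Prop :=
  ∀ s t : Finset (EuclideanSpace ℝ (Fin n)), s ∪ t = R.Δ → Disjoint s t →
    (∀ a ∈ s, ∀ b ∈ t, (inner ℝ a b : ℝ) = 0) → s = ∅ ∨ t = ∅

/-- The positive roots of the localized root system `Φ_X = Φ ∩ X^⊥`. -/
noncomputable def PosIn (R : CRS n) (X : Submodule ℝ (EuclideanSpace ℝ (Fin n))) :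
    Finset (EuclideanSpace ℝ (Fin n)) :=
  R.Pos.filter (fun β => β ∈ Xᗮ)

end CRS

/-- The hyperplane orthogonal to a root `β`. -/
noncomputable def H {n : ℕ} (β : EuclideanSpace ℝ (Fin n)) : Submodule ℝ (EuclideanSpace ℝ (Fin n)) :=
  (ℝ ∙ β)ᗮ

/-- The simple system (the indecomposable elements) of a positive system `P`. -/
noncomputable def simpleOf {n : ℕ} (P : Finset (EuclideanSpace ℝ (Fin n))) :
    Finset (EuclideanSpace ℝ (Fin n)) :=
  P.filter (fun γ => ¬ ∃ β₁ ∈ P, ∃ β₂ ∈ P, γ = β₁ + β₂)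

namespace Aux
variable {n : ℕ}

lemma delta_coeffs (R : CRS n) (c : EuclideanSpace ℝ (Fin n) → ℝ)
    (h : ∑ a ∈ R.Δ, c a • a = 0) : ∀ a ∈ R.Δ, c a = 0 := by
  have h' : ∑ a : R.Δ, c (a : EuclideanSpace ℝ (Fin n)) • (a : EuclideanSpace ℝ (Fin n)) = 0 := by
    rw [Finset.sum_coe_sort R.Δ (fun a => c a • a)]; exact h
  intro a ha
  exact Fintype.linearIndependent_iff.mp R.Δ_indep (fun a => c a) h' ⟨a, ha⟩

lemma ht_ne_zero (R : CRS n) {β : EuclideanSpace ℝ (Fin n)} (hβ : β ∈ R.Pos) :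
    R.ht β ≠ 0 := by
  intro h0
  have hc : ∀ a ∈ R.Δ, R.coeff β a = 0 := Finset.sum_eq_zero_iff.mp h0
  have hb0 : β = 0 := by
    rw [R.pos_eq_sum β hβ]
    exact Finset.sum_eq_zero fun a ha => by rw [hc a ha]; simp
  exact R.zero_notmem (hb0 ▸ R.Pos_sub hβ)

lemma root_sub (R : CRS n) {α β : EuclideanSpace ℝ (Fin n)} (hα : α ∈ R.Φ) (hβ : β ∈ R.Φ)
    (hne : α ≠ β) (hpos : (0:ℝ) < inner ℝ α β) : β - α ∈ R.Φ := by
  have hα0 : α ≠ 0 := fun h => R.zero_notmem (h ▸ hα)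
  have hβ0 : β ≠ 0 := fun h => R.zero_notmem (h ▸ hβ)
  have hαα : (0:ℝ) < inner ℝ α α := not_le.mp (fun hle => hα0 (real_inner_self_nonpos.mp hle))
  have hββ : (0:ℝ) < inner ℝ β β := not_le.mp (fun hle => hβ0 (real_inner_self_nonpos.mp hle))
  obtain ⟨z₁, hz₁⟩ := R.cartan_int α hα β hβ
  obtain ⟨z₂, hz₂⟩ := R.cartan_int β hβ α hα
  have hsymm : (inner ℝ β α : ℝ) = inner ℝ α β := real_inner_comm α β
  have hz₁pos : (0:ℝ) < z₁ := by rw [← hz₁]; positivity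
  have hz₂pos : (0:ℝ) < z₂ := by rw [← hz₂, hsymm]; positivity
  -- strict Cauchy-Schwarz
  have hCSne : |(inner ℝ α β : ℝ)| ≠ ‖α‖ * ‖β‖ := by
    intro heq
    have := norm_inner_eq_norm_iff (𝕜 := ℝ) hα0 hβ0
    simp only [Real.norm_eq_abs] at this
    obtain ⟨r, hr0, hβα⟩ := this.mp heq
    rcases R.reduced α hα r (hβα ▸ hβ) with h1 | h1
    · exact hne (by rw [hβα, h1, one_smul])
    · rw [hβα, h1, real_inner_smul_right] at hpos; nlinarith
  have hCS : |(inner ℝ α β : ℝ)| < ‖α‖ * ‖β‖ :=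
    lt_of_le_of_ne (abs_real_inner_le_norm α β) hCSne
  have hsq : (inner ℝ α β : ℝ) * inner ℝ α β < inner ℝ α α * inner ℝ β β := by
    have h1 : (inner ℝ α β : ℝ) * inner ℝ α β = |(inner ℝ α β : ℝ)| * |(inner ℝ α β : ℝ)| := by
      rw [← abs_mul, abs_mul_self]
    rw [h1, real_inner_self_eq_norm_mul_norm, real_inner_self_eq_norm_mul_norm]
    calc |(inner ℝ α β : ℝ)| * |(inner ℝ α β : ℝ)| < (‖α‖ * ‖β‖) * (‖α‖ * ‖β‖) := by
          apply mul_self_lt_mul_self (abs_nonneg _) hCS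
      _ = ‖α‖ * ‖α‖ * (‖β‖ * ‖β‖) := by ring
  have hprod : (z₁:ℝ) * z₂ < 4 := by
    have : (z₁:ℝ) * z₂ = 4 * (inner ℝ α β * inner ℝ α β) / (inner ℝ α α * inner ℝ β β) := by
      rw [← hz₁, ← hz₂, hsymm]; field_simp; ring
    rw [this]
    rw [div_lt_iff₀ (by positivity)]
    nlinarith
  have hz₁i : 1 ≤ z₁ := by have : (0:ℤ) < z₁ := by exact_mod_cast hz₁pos
                           omega
  have hz₂i : 1 ≤ z₂ := by have : (0:ℤ) < z₂ := by exact_mod_cast hz₂pos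
                           omega
  have hprodi : z₁ * z₂ ≤ 3 := by
    have : z₁ * z₂ < 4 := by exact_mod_cast hprod
    omega
  have hone : z₁ = 1 ∨ z₂ = 1 := by
    by_contra hcon
    push_neg at hcon
    have ha : 2 ≤ z₁ := by omega
    have hb : 2 ≤ z₂ := by omega
    nlinarith
  rcases hone with h1 | h1
  · have := R.reflect_mem α hα β hβ
    rw [hz₁, h1] at this
    simpa using this
  · have := R.reflect_mem β hβ α hα
    rw [hz₂, h1] at this
    have h2 := R.neg_mem _ this
    simpa [neg_sub] using h2

lemma sub_notmem_pos (R : CRS n) {β γ : EuclideanSpace ℝ (Fin n)} (hβ : β ∈ R.Pos)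
    (hγ : γ ∈ R.Pos) (hh : R.ht β = R.ht γ) (hδ : γ - β ∈ R.Pos) : False := by
  have h1 : ∑ a ∈ R.Δ, (((R.coeff (γ - β) a : ℝ)) - (R.coeff γ a : ℝ) + (R.coeff β a : ℝ)) • a
      = 0 := by
    have e1 := R.pos_eq_sum β hβ
    have e2 := R.pos_eq_sum γ hγ
    have e3 := R.pos_eq_sum (γ - β) hδ
    simp only [sub_smul, add_smul, Finset.sum_add_distrib, Finset.sum_sub_distrib]
    rw [← e1, ← e2, ← e3]
    abel
  have h2 := delta_coeffs R _ h1
  have h3 : (R.ht (γ - β) : ℝ) - R.ht γ + R.ht β = 0 := by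
    unfold CRS.ht
    push_cast
    rw [← Finset.sum_sub_distrib, ← Finset.sum_add_distrib]
    exact Finset.sum_eq_zero h2
  have h4 : R.ht (γ - β) = 0 := by
    have : (R.ht (γ - β) : ℝ) = 0 := by rw [hh] at h3; linarith
    exact_mod_cast this
  exact ht_ne_zero R hδ h4

lemma obtuse (R : CRS n) {β γ : EuclideanSpace ℝ (Fin n)} (hβ : β ∈ R.Pos) (hγ : γ ∈ R.Pos)
    (hh : R.ht β = R.ht γ) (hne : β ≠ γ) : (inner ℝ β γ : ℝ) ≤ 0 := by
  by_contra h
  push_neg at h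
  have hδ : γ - β ∈ R.Φ := root_sub R (R.Pos_sub hβ) (R.Pos_sub hγ) hne h
  rcases R.pos_or_neg _ hδ with h1 | h1
  · exact sub_notmem_pos R hβ hγ hh h1
  · rw [neg_sub] at h1
    exact sub_notmem_pos R hγ hβ hh.symm h1

lemma nonneg_comb (R : CRS n) {S : Finset (EuclideanSpace ℝ (Fin n))} (hS : S ⊆ R.Pos)
    (c : EuclideanSpace ℝ (Fin n) → ℝ) (hc : ∀ β ∈ S, 0 ≤ c β)
    (h : ∑ β ∈ S, c β • β = 0) : ∀ β ∈ S, c β = 0 := by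
  have hexp : ∑ a ∈ R.Δ, (∑ β ∈ S, c β * (R.coeff β a : ℝ)) • a = 0 := by
    calc ∑ a ∈ R.Δ, (∑ β ∈ S, c β * (R.coeff β a : ℝ)) • a
        = ∑ a ∈ R.Δ, ∑ β ∈ S, (c β * (R.coeff β a : ℝ)) • a := by
          exact Finset.sum_congr rfl fun a _ => Finset.sum_smul
      _ = ∑ β ∈ S, ∑ a ∈ R.Δ, (c β * (R.coeff β a : ℝ)) • a := Finset.sum_comm
      _ = ∑ β ∈ S, c β • β := by
          refine Finset.sum_congr rfl fun β hβ => ?_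
          have : ∑ a ∈ R.Δ, (c β * (R.coeff β a : ℝ)) • a
              = c β • ∑ a ∈ R.Δ, (R.coeff β a : ℝ) • a := by
            rw [Finset.smul_sum]
            exact Finset.sum_congr rfl fun a _ => mul_smul _ _ _
          rw [this, ← R.pos_eq_sum β (hS hβ)]
      _ = 0 := h
  have h2 := delta_coeffs R _ hexp
  intro β hβ
  by_contra hcβ
  have hcβ' : 0 < c β := lt_of_le_of_ne (hc β hβ) (Ne.symm hcβ)
  have hco : ∀ a ∈ R.Δ, R.coeff β a = 0 := by
    intro a ha
    have := (Finset.sum_eq_zero_iff_of_nonneg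
      (fun γ hγ => mul_nonneg (hc γ hγ) (Nat.cast_nonneg _))).mp (h2 a ha) β hβ
    have : (R.coeff β a : ℝ) = 0 := by
      rcases mul_eq_zero.mp this with h' | h'
      · exact absurd h' (ne_of_gt hcβ')
      · exact h'
    exact_mod_cast this
  exact ht_ne_zero R (hS hβ) (Finset.sum_eq_zero hco)

lemma comb_zero (R : CRS n) {B : Finset (EuclideanSpace ℝ (Fin n))} (hB : B ⊆ R.Pos) (k : ℕ)
    (hht : ∀ β ∈ B, R.ht β = k + 1) (c : EuclideanSpace ℝ (Fin n) → ℝ)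
    (h : ∑ β ∈ B, c β • β = 0) : ∀ β ∈ B, c β = 0 := by
  set P := B.filter (fun β => 0 < c β) with hP
  set N := B.filter (fun β => c β < 0) with hN
  have hdis : Disjoint P N := by
    rw [Finset.disjoint_left]
    intro β hβP hβN
    have h1 := (Finset.mem_filter.mp hβP).2
    have h2 := (Finset.mem_filter.mp hβN).2
    linarith
  have hPN : P ∪ N ⊆ B :=
    Finset.union_subset (Finset.filter_subset _ _) (Finset.filter_subset _ _)
  have hsum_eq : ∑ β ∈ P ∪ N, c β • β = ∑ β ∈ B, c β • β := by
    apply Finset.sum_subset hPN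
    intro β hβ hno
    have hc0 : c β = 0 := by
      by_contra hc0
      rcases lt_or_gt_of_ne hc0 with h1 | h1
      · exact hno (Finset.mem_union_right _ (Finset.mem_filter.mpr ⟨hβ, h1⟩))
      · exact hno (Finset.mem_union_left _ (Finset.mem_filter.mpr ⟨hβ, h1⟩))
    rw [hc0, zero_smul]
  have hsplit : (∑ β ∈ P, c β • β) + ∑ β ∈ N, c β • β = 0 := by
    rw [← Finset.sum_union hdis, hsum_eq, h]
  have hvN : (∑ β ∈ P, c β • β) = ∑ β ∈ N, (-(c β)) • β := by
    have := eq_neg_of_add_eq_zero_left hsplit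
    rw [this, ← Finset.sum_neg_distrib]
    exact Finset.sum_congr rfl fun β _ => (neg_smul _ _).symm
  have hv0 : (∑ β ∈ P, c β • β) = 0 := by
    have hip : (inner ℝ (∑ β ∈ P, c β • β) (∑ β ∈ P, c β • β) : ℝ) ≤ 0 := by
      nth_rewrite 2 [hvN]
      rw [sum_inner]
      apply Finset.sum_nonpos
      intro β hβ
      rw [real_inner_smul_left, inner_sum]
      apply mul_nonpos_of_nonneg_of_nonpos
      · exact le_of_lt (Finset.mem_filter.mp hβ).2
      · apply Finset.sum_nonpos
        intro γ hγ
        rw [real_inner_smul_right]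
        have hβB := (Finset.mem_filter.mp hβ).1
        have hγB := (Finset.mem_filter.mp hγ).1
        have hne : β ≠ γ := by
          intro he
          have h1 := (Finset.mem_filter.mp hβ).2
          have h2 := (Finset.mem_filter.mp hγ).2
          rw [he] at h1; linarith
        have hob : (inner ℝ β γ : ℝ) ≤ 0 :=
          obtuse R (hB hβB) (hB hγB) (by rw [hht β hβB, hht γ hγB]) hne
        have hγneg : -(c γ) ≥ 0 := by
          have := (Finset.mem_filter.mp hγ).2; linarith
        nlinarith
    exact real_inner_self_nonpos.mp hip
  have hPz := nonneg_comb R (Finset.Subset.trans (Finset.filter_subset _ _) hB) c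
    (fun β hβ => le_of_lt (Finset.mem_filter.mp hβ).2) hv0
  have hN0 : (∑ β ∈ N, (-(c β)) • β) = 0 := by rw [← hvN]; exact hv0
  have hNz := nonneg_comb R (Finset.Subset.trans (Finset.filter_subset _ _) hB)
    (fun β => -(c β)) (fun β hβ => by have := (Finset.mem_filter.mp hβ).2; show (0:ℝ) ≤ -(c β); linarith) hN0
  intro β hβ
  by_contra hc0
  rcases lt_or_gt_of_ne hc0 with h1 | h1
  · have : β ∈ N := Finset.mem_filter.mpr ⟨hβ, h1⟩
    have h2 : -(c β) = 0 := hNz β this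
    linarith
  · have : β ∈ P := Finset.mem_filter.mpr ⟨hβ, h1⟩
    have := hPz β this; linarith

end Aux

/-- the intersection of the hyperplanes of `q` distinct positive
roots of the same height `k+1` has codimension `q`. -/
theorem codim_inf_hyperplanes_same_height {n : ℕ} (R : CRS n)
    (B : Finset (EuclideanSpace ℝ (Fin n))) (hB : B ⊆ R.Pos) (k : ℕ)
    (hht : ∀ β ∈ B, R.ht β = k + 1) :
    Module.finrank ℝ (EuclideanSpace ℝ (Fin n) ⧸ (⨅ β ∈ B, H β)) = B.card := by
  classical
  have hli : LinearIndependent ℝ ((↑) : B → EuclideanSpace ℝ (Fin n)) := by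
    apply Fintype.linearIndependent_iff.mpr
    intro g hg
    set c : EuclideanSpace ℝ (Fin n) → ℝ := fun v => if h : v ∈ B then g ⟨v, h⟩ else 0 with hcdef
    have hsum : ∑ β ∈ B, c β • β = 0 := by
      rw [← Finset.sum_coe_sort B (fun β => c β • β), ← hg]
      exact Finset.sum_congr rfl fun i _ => by simp [hcdef, i.2]
    have hall := Aux.comb_zero R hB k hht c hsum
    intro i
    have := hall i i.2
    simpa [hcdef, i.2] using this
  have hX : (⨅ β ∈ B, H β) = (Submodule.span ℝ (B : Set (EuclideanSpace ℝ (Fin n))))ᗮ := by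
    ext x
    simp only [H, Submodule.mem_iInf, Submodule.mem_orthogonal,
      Submodule.mem_span_singleton, Finset.mem_coe]
    constructor
    · intro h u hu
      induction hu using Submodule.span_induction with
      | mem u hu => exact h u hu u ⟨1, one_smul _ _⟩
      | zero => simp
      | add u v _ _ hu hv => rw [inner_add_left, hu, hv]; ring
      | smul a u _ hu => rw [real_inner_smul_left, hu]; ring
    · intro h β hβ u hu
      obtain ⟨a, rfl⟩ := hu
      rw [real_inner_smul_left, h β (Submodule.subset_span hβ)]; ring
  rw [hX]
  have h1 := Submodule.finrank_quotient_add_finrank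
    (Submodule.span ℝ (B : Set (EuclideanSpace ℝ (Fin n))))ᗮ
  have h2 := Submodule.finrank_add_finrank_orthogonal
    (Submodule.span ℝ (B : Set (EuclideanSpace ℝ (Fin n))))
  have h3 : Module.finrank ℝ (Submodule.span ℝ (B : Set (EuclideanSpace ℝ (Fin n)))) = B.card :=
    finrank_span_finset_eq_card hli
  omega
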